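/- Let 1 = r₀ ≤ a < b and let λ be the smallest positive root of cot(λ·ln(b/a)) = λ·ln(a). If μ > λ, then the solution y of the ODE y'' + (1 + 4μ²·χ_{[a,b]}(r))/(4r²)·y = 0 with y(1) = 0 and y'(1) = 1 vanishes at some r > 1. -/

import Mathlib

open Real Set

private lemma const_of_hasDerivAt_zero {f : ℝ → ℝ} {c d : ℝ} (hcd : c ≤ d)
    (hf : ContinuousOn f (Icc c d)) (hf' : ∀ x ∈ Ioo c d, HasDerivAt f 0 x) : f d = f c := by
  have hdiff : DifferentiableOn ℝ f (interior (Icc c d)) := by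
    rw [interior_Icc]
    exact fun x hx => ((hf' x hx).differentiableAt).differentiableWithinAt
  have h1 : MonotoneOn f (Icc c d) :=
    monotoneOn_of_deriv_nonneg (convex_Icc c d) hf hdiff (by
      rw [interior_Icc]; intro x hx; rw [(hf' x hx).deriv])
  have h2 : AntitoneOn f (Icc c d) :=
    antitoneOn_of_deriv_nonpos (convex_Icc c d) hf hdiff (by
      rw [interior_Icc]; intro x hx; rw [(hf' x hx).deriv])
  exact le_antisymm (h2 (left_mem_Icc.2 hcd) (right_mem_Icc.2 hcd) hcd)
    (h1 (left_mem_Icc.2 hcd) (right_mem_Icc.2 hcd) hcd)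

private lemma hg1 {r : ℝ} (hr : 0 < r) :
    HasDerivAt (fun x => sqrt x * log x) ((log r / 2 + 1) / sqrt r) r := by
  have h := (Real.hasDerivAt_sqrt hr.ne').mul (Real.hasDerivAt_log hr.ne')
  refine h.congr_deriv ?_; symm
  have hs : sqrt r ^ 2 = r := Real.sq_sqrt hr.le
  have hs0 : sqrt r ≠ 0 := (Real.sqrt_pos.2 hr).ne'
  field_simp
  linear_combination (-2) * hs

private lemma hd1 {r : ℝ} (hr : 0 < r) :
    HasDerivAt (fun x => (log x / 2 + 1) / sqrt x)
      (-(1 / (4 * r ^ 2)) * (sqrt r * log r)) r := by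
  have h := (((Real.hasDerivAt_log hr.ne').div_const 2).add_const 1).div
    (Real.hasDerivAt_sqrt hr.ne') (Real.sqrt_pos.2 hr).ne'
  refine h.congr_deriv ?_; symm
  have hs : sqrt r ^ 2 = r := Real.sq_sqrt hr.le
  have hs0 : sqrt r ≠ 0 := (Real.sqrt_pos.2 hr).ne'
  field_simp
  linear_combination (-4*Real.log r*Real.sqrt r^2 - 8*r - 4*Real.log r*r) * hs

private lemma hlog_div {bb r : ℝ} (hr : 0 < r) (hbb : 0 < bb) :
    HasDerivAt (fun x : ℝ => log (x / bb)) r⁻¹ r := by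
  have h := ((hasDerivAt_id r).div_const bb).log (div_ne_zero hr.ne' hbb.ne')
  refine h.congr_deriv ?_; symm
  field_simp
  simp [hr.ne']

private lemma hg3 (α β : ℝ) {bb r : ℝ} (hr : 0 < r) (hbb : 0 < bb) :
    HasDerivAt (fun x => sqrt x * (α + β * log (x / bb)))
      (((α + β * log (r / bb)) / 2 + β) / sqrt r) r := by
  have h := (Real.hasDerivAt_sqrt hr.ne').mul
    (((hlog_div hr hbb).const_mul β).const_add α)
  refine h.congr_deriv ?_; symm
  have hs : sqrt r ^ 2 = r := Real.sq_sqrt hr.le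
  have hs0 : sqrt r ≠ 0 := (Real.sqrt_pos.2 hr).ne'
  field_simp
  linear_combination (-2*β) * hs

private lemma hd3 (α β : ℝ) {bb r : ℝ} (hr : 0 < r) (hbb : 0 < bb) :
    HasDerivAt (fun x => ((α + β * log (x / bb)) / 2 + β) / sqrt x)
      (-(1 / (4 * r ^ 2)) * (sqrt r * (α + β * log (r / bb)))) r := by
  have h := ((((hlog_div hr hbb).const_mul β).const_add α).div_const 2 |>.add_const β).div
    (Real.hasDerivAt_sqrt hr.ne') (Real.sqrt_pos.2 hr).ne'
  refine h.congr_deriv ?_; symm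
  have hs : sqrt r ^ 2 = r := Real.sq_sqrt hr.le
  have hs0 : sqrt r ≠ 0 := (Real.sqrt_pos.2 hr).ne'
  field_simp
  rw [div_eq_mul_inv r bb]
  linear_combination (-4*(α + β * Real.log (r * bb⁻¹))*Real.sqrt r^2 - 8*β*r - 4*(α + β * Real.log (r * bb⁻¹))*r) * hs

private lemma hg2 (C m φ : ℝ) {aa r : ℝ} (hr : 0 < r) (haa : 0 < aa) :
    HasDerivAt (fun x => sqrt x * (C * sin (m * log (x / aa) + φ)))
      (C * (sin (m * log (r / aa) + φ) / 2 + m * cos (m * log (r / aa) + φ)) / sqrt r) r := by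
  have hθ : HasDerivAt (fun x : ℝ => m * log (x / aa) + φ) (m * r⁻¹) r :=
    ((hlog_div hr haa).const_mul m).add_const φ
  have h := (Real.hasDerivAt_sqrt hr.ne').mul ((hθ.sin).const_mul C)
  refine h.congr_deriv ?_; symm
  have hs : sqrt r ^ 2 = r := Real.sq_sqrt hr.le
  have hs0 : sqrt r ≠ 0 := (Real.sqrt_pos.2 hr).ne'
  field_simp
  rw [div_eq_mul_inv r aa]
  linear_combination (-2 * C * m * Real.cos (m * Real.log (r * aa⁻¹) + φ)) * hs

private lemma hd2 (C m φ : ℝ) {aa r : ℝ} (hr : 0 < r) (haa : 0 < aa) :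
    HasDerivAt (fun x => C * (sin (m * log (x / aa) + φ) / 2 + m * cos (m * log (x / aa) + φ)) / sqrt x)
      (-((1 + 4 * m ^ 2) / (4 * r ^ 2)) * (sqrt r * (C * sin (m * log (r / aa) + φ)))) r := by
  have hθ : HasDerivAt (fun x : ℝ => m * log (x / aa) + φ) (m * r⁻¹) r :=
    ((hlog_div hr haa).const_mul m).add_const φ
  have h := ((((hθ.sin).div_const 2).add ((hθ.cos).const_mul m)).const_mul C).div
    (Real.hasDerivAt_sqrt hr.ne') (Real.sqrt_pos.2 hr).ne'
  refine h.congr_deriv ?_; symm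
  have hs : sqrt r ^ 2 = r := Real.sq_sqrt hr.le
  have hs0 : sqrt r ≠ 0 := (Real.sqrt_pos.2 hr).ne'
  simp only [Pi.add_apply]
  field_simp
  rw [div_eq_mul_inv r aa]
  linear_combination (-8*r*m*C*Real.cos (m*Real.log (r*aa⁻¹)+φ) + C*Real.sin (m*Real.log (r*aa⁻¹)+φ)*(-16*m^2*Real.sqrt r^2 - 4*Real.sqrt r^2 - 4*r)) * hs

private lemma phase_eq {la L lam : ℝ} (hL : 0 < L) (hla : 0 ≤ la) (hlam : 0 < lam)
    (hroot : Real.cot (lam * L) = lam * la)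
    (hmin : ∀ x : ℝ, 0 < x → Real.cot (x * L) = x * la → lam ≤ x) :
    lam * L + Real.arctan (lam * la) = π / 2 := by
  -- first: lam * L ≤ π / 2 via existence of a root in (0, π/(2L)]
  have hπ := Real.pi_pos
  set ε : ℝ := min (π / (4 * L)) (1 / (1 + la)) with hε_def
  have hε0 : 0 < ε := lt_min (by positivity) (by positivity)
  have hεle : ε ≤ π / (2 * L) := le_trans (min_le_left _ _) (by
    rw [div_le_div_iff₀ (by positivity) (by positivity)]; nlinarith)
  set g : ℝ → ℝ := fun x => Real.cos (x * L) / Real.sin (x * L) - x * la with hg_def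
  have hgc : ContinuousOn g (Icc ε (π / (2 * L))) := by
    apply ContinuousOn.sub
    · apply ContinuousOn.div
      · fun_prop
      · fun_prop
      · intro x hx
        have h1 : 0 < x * L := mul_pos (hε0.trans_le hx.1) hL
        have h2 : x * L ≤ π / 2 := by
          have := hx.2
          calc x * L ≤ (π / (2 * L)) * L := by nlinarith
            _ = π / 2 := by field_simp
        exact (Real.sin_pos_of_pos_of_lt_pi h1 (h2.trans_lt (by linarith))).ne'
    · fun_prop
  have hgb : g (π / (2 * L)) ≤ 0 := by
    have : (π / (2 * L)) * L = π / 2 := by field_simp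
    simp only [hg_def, this, Real.cos_pi_div_two, zero_div]
    have : 0 ≤ (π / (2 * L)) * la := by positivity
    linarith
  have hga : 0 ≤ g ε := by
    have hεL : ε * L ≤ π / 4 := by
      have h1 : ε ≤ π / (4 * L) := min_le_left _ _
      calc ε * L ≤ (π / (4 * L)) * L := by nlinarith
        _ = π / 4 := by field_simp
    have hεL0 : 0 < ε * L := mul_pos hε0 hL
    have hs0 : 0 < Real.sin (ε * L) := Real.sin_pos_of_pos_of_lt_pi hεL0 (by nlinarith)
    have hcs : Real.sin (ε * L) ≤ Real.cos (ε * L) := by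
      have h1 : Real.sin (ε * L) ≤ Real.sin (π / 4) := by
        apply Real.strictMonoOn_sin.monotoneOn ⟨by linarith, by linarith⟩
          ⟨by linarith, by linarith⟩ hεL
      have h2 : Real.cos (π / 4) ≤ Real.cos (ε * L) := by
        apply Real.strictAntiOn_cos.antitoneOn ⟨by linarith, by nlinarith⟩
          ⟨by positivity, by nlinarith⟩ hεL
      rw [Real.sin_pi_div_four] at h1
      rw [Real.cos_pi_div_four] at h2
      linarith
    have hratio : 1 ≤ Real.cos (ε * L) / Real.sin (ε * L) :=
      (one_le_div hs0).2 hcs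
    have hεla : ε * la < 1 := by
      have h2 : ε ≤ 1 / (1 + la) := min_le_right _ _
      have : ε * la ≤ (1 / (1 + la)) * la := by nlinarith
      have h3 : (1 / (1 + la)) * la < 1 := by
        rw [div_mul_eq_mul_div, div_lt_one (by positivity)]; linarith
      linarith
    simp only [hg_def]; linarith
  obtain ⟨x₀, hx₀mem, hx₀⟩ := intermediate_value_Icc' hεle hgc ⟨hgb, hga⟩
  have hx₀pos : 0 < x₀ := hε0.trans_le hx₀mem.1
  have hx₀L : 0 < x₀ * L := mul_pos hx₀pos hL
  have hx₀L2 : x₀ * L ≤ π / 2 := by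
    have := hx₀mem.2
    calc x₀ * L ≤ (π / (2 * L)) * L := by nlinarith
      _ = π / 2 := by field_simp
  have hx₀root : Real.cot (x₀ * L) = x₀ * la := by
    rw [Real.cot_eq_cos_div_sin]
    have := hx₀
    simp only [hg_def] at this
    linarith
  have hlamle : lam ≤ x₀ := hmin x₀ hx₀pos hx₀root
  have hlamL : lam * L ≤ π / 2 := by
    calc lam * L ≤ x₀ * L := by nlinarith
      _ ≤ π / 2 := hx₀L2
  have hlamL0 : 0 < lam * L := mul_pos hlam hL
  -- now conclude
  rcases eq_or_lt_of_le hlamL with heq | hlt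
  · have : Real.cot (lam * L) = 0 := by
      rw [heq, Real.cot_eq_cos_div_sin, Real.cos_pi_div_two, zero_div]
    rw [hroot] at this
    rw [heq, this, Real.arctan_zero, add_zero]
  · have hcot : Real.cot (lam * L) = Real.tan (π / 2 - lam * L) := by
      rw [Real.tan_pi_div_two_sub, Real.cot_eq_cos_div_sin, Real.tan_eq_sin_div_cos,
        inv_div]
    have harc : Real.arctan (lam * la) = π / 2 - lam * L := by
      rw [← hroot, hcot, Real.arctan_tan (by linarith) (by linarith)]
    rw [harc]; ring
private lemma wronskian_const (y g d : ℝ → ℝ) (qc c e : ℝ) (hce : c ≤ e)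
    (hycont : ContinuousOn y (Icc c e)) (hdycont : ContinuousOn (deriv y) (Icc c e))
    (hgcont : ContinuousOn g (Icc c e)) (hdcont : ContinuousOn d (Icc c e))
    (hy' : ∀ x ∈ Ioo c e, HasDerivAt y (deriv y x) x)
    (hy'' : ∀ x ∈ Ioo c e, HasDerivAt (deriv y) (-(qc / (4 * x ^ 2)) * y x) x)
    (hg : ∀ x ∈ Ioo c e, HasDerivAt g (d x) x)
    (hd : ∀ x ∈ Ioo c e, HasDerivAt d (-(qc / (4 * x ^ 2)) * g x) x) :
    g e * deriv y e - d e * y e = g c * deriv y c - d c * y c := by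
  have := const_of_hasDerivAt_zero (f := fun x => g x * deriv y x - d x * y x) hce
    (((hgcont.mul hdycont).sub (hdcont.mul hycont)))
    (fun x hx => by
      have h := ((hg x hx).mul (hy'' x hx)).sub ((hd x hx).mul (hy' x hx))
      refine h.congr_deriv ?_
      ring)
  exact this

/-- Linear kick lemma: if `1 ≤ a < b`, `λ` is the smallest positive root of
`cot (λ log (b/a)) = λ log a`, and `μ > λ`, then any `C¹` solution on `[1, ∞)` of the
kicked Sturm–Liouville equation `y'' + (1 + 4 μ² χ_{[a,b]}(r)) / (4 r²) · y = 0`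
with `y 1 = 0`, `y' 1 = 1` vanishes at some `r > 1`. -/
theorem stmt_3 (a b lam μ : ℝ) (ha : 1 ≤ a) (hab : a < b)
    (hlam_pos : 0 < lam)
    (hlam_root : Real.cot (lam * Real.log (b / a)) = lam * Real.log a)
    (hlam_min : ∀ x : ℝ, 0 < x → Real.cot (x * Real.log (b / a)) = x * Real.log a → lam ≤ x)
    (hμ : lam < μ)
    (y : ℝ → ℝ)
    (hy : ContDiffOn ℝ 1 y (Set.Ici 1))
    (hode : ∀ r : ℝ, 1 < r → r ≠ a → r ≠ b →
      deriv (deriv y) r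
        + (1 + 4 * μ ^ 2 * (Set.Icc a b).indicator (fun _ => (1 : ℝ)) r) / (4 * r ^ 2) * y r
        = 0)
    (h0 : y 1 = 0) (h0' : deriv y 1 = 1) :
    ∃ r : ℝ, 1 < r ∧ y r = 0 := by
  by_contra hcon
  push_neg at hcon
  have ha0 : (0:ℝ) < a := lt_of_lt_of_le one_pos ha
  have hb0 : (0:ℝ) < b := ha0.trans hab
  have hb1 : (1:ℝ) < b := lt_of_le_of_lt ha hab
  set la := Real.log a with hla_def
  set L := Real.log (b / a) with hL_def
  have hla : 0 ≤ la := Real.log_nonneg ha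
  have hL : 0 < L := Real.log_pos ((one_lt_div ha0).2 hab)
  have hμ0 : 0 < μ := hlam_pos.trans hμ
  set φ := Real.arctan (μ * la) with hφ_def
  set C := Real.sqrt (1 + (μ * la) ^ 2) / μ with hC_def
  have hX : (0:ℝ) < Real.sqrt (1 + (μ * la) ^ 2) := Real.sqrt_pos.2 (by positivity)
  have hC : 0 < C := div_pos hX hμ0
  have hsinφ : C * Real.sin φ = la := by
    rw [hφ_def, Real.sin_arctan, hC_def]
    field_simp
  have hcosφ : C * (μ * Real.cos φ) = 1 := by
    rw [hφ_def, Real.cos_arctan, hC_def]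
    field_simp
  set θb := μ * L + φ with hθb_def
  have hφ0 : 0 ≤ φ := by
    rw [hφ_def, ← Real.arctan_zero]
    exact Real.arctan_strictMono.monotone (by positivity)
  have hφlt : φ < π / 2 := Real.arctan_lt_pi_div_two _
  have hθbgt : π / 2 < θb := by
    have hkey := phase_eq hL hla hlam_pos hlam_root hlam_min
    have h1 : lam * L < μ * L := by nlinarith
    have h2 : Real.arctan (lam * la) ≤ φ := by
      rw [hφ_def]
      exact Real.arctan_strictMono.monotone (by nlinarith)
    rw [hθb_def]; linarith
  -- differentiability / continuity of y and deriv y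
  have hdiffAll : ∀ r ∈ Ici (1:ℝ), DifferentiableAt ℝ y r := by
    intro r hr
    rcases eq_or_lt_of_le (show (1:ℝ) ≤ r from hr) with rfl | hr1
    · by_contra hnd
      have hz := deriv_zero_of_not_differentiableAt hnd
      rw [h0'] at hz; norm_num at hz
    · exact ((hy.differentiableOn one_ne_zero) r (le_of_lt hr1)).differentiableAt
        (Ici_mem_nhds hr1)
  have hycont : ContinuousOn y (Ici 1) := hy.continuousOn
  have hdycont : ContinuousOn (deriv y) (Ici 1) := by
    have h1 := hy.continuousOn_derivWithin (uniqueDiffOn_Ici 1) le_rfl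
    apply h1.congr
    intro r hr
    exact ((hdiffAll r hr).derivWithin ((uniqueDiffOn_Ici 1) r hr)).symm
  -- second derivative from the ODE
  have hode' : ∀ r, 1 < r → r ≠ a → r ≠ b →
      HasDerivAt (deriv y)
        (-((1 + 4 * μ ^ 2 * (Set.Icc a b).indicator (fun _ => (1:ℝ)) r) / (4 * r ^ 2)) * y r)
        r := by
    intro r h1 hA hB
    have hr0 : (0:ℝ) < r := one_pos.trans h1
    have hind : 0 ≤ (Set.Icc a b).indicator (fun _ => (1:ℝ)) r :=
      Set.indicator_nonneg (fun _ _ => zero_le_one) r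
    have hcoef : 0 < (1 + 4 * μ ^ 2 * (Set.Icc a b).indicator (fun _ => (1:ℝ)) r)
        / (4 * r ^ 2) := by
      apply div_pos
      · nlinarith [sq_nonneg μ, mul_nonneg (mul_nonneg (by norm_num : (0:ℝ) ≤ 4) (sq_nonneg μ)) hind]
      · positivity
    have hdiff2 : DifferentiableAt ℝ (deriv y) r := by
      by_contra hnd
      have hz := deriv_zero_of_not_differentiableAt hnd
      have h2 := hode r h1 hA hB
      rw [hz, zero_add] at h2
      exact hcon r h1 ((mul_eq_zero.1 h2).resolve_left hcoef.ne')
    have h3 := hdiff2.hasDerivAt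
    have h2 := hode r h1 hA hB
    have heq : deriv (deriv y) r
        = -((1 + 4 * μ ^ 2 * (Set.Icc a b).indicator (fun _ => (1:ℝ)) r) / (4 * r ^ 2)) * y r := by
      linarith
    rwa [heq] at h3
  have hode1 : ∀ x ∈ Ioo (1:ℝ) a, HasDerivAt (deriv y) (-((1:ℝ) / (4 * x ^ 2)) * y x) x := by
    intro x hx
    have hxa : x ∉ Set.Icc a b := fun h => absurd h.1 (not_le.2 hx.2)
    have h := hode' x hx.1 (ne_of_lt hx.2) (ne_of_lt (hx.2.trans hab))
    rwa [Set.indicator_of_notMem hxa, mul_zero, add_zero] at h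
  have hode2 : ∀ x ∈ Ioo a b, HasDerivAt (deriv y)
      (-((1 + 4 * μ ^ 2) / (4 * x ^ 2)) * y x) x := by
    intro x hx
    have hxa : x ∈ Set.Icc a b := ⟨hx.1.le, hx.2.le⟩
    have h := hode' x (lt_of_le_of_lt ha hx.1) (ne_of_gt hx.1) (ne_of_lt hx.2)
    rwa [Set.indicator_of_mem hxa, mul_one] at h
  have hode3 : ∀ x, b < x → HasDerivAt (deriv y) (-((1:ℝ) / (4 * x ^ 2)) * y x) x := by
    intro x hx
    have hxa : x ∉ Set.Icc a b := fun h => absurd h.2 (not_le.2 hx)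
    have h := hode' x (hb1.trans hx) (ne_of_gt (hab.trans hx)) (ne_of_gt hx)
    rwa [Set.indicator_of_notMem hxa, mul_zero, add_zero] at h
  -- the comparison solutions
  set gf1 : ℝ → ℝ := fun x => Real.sqrt x * Real.log x with hgf1_def
  set df1 : ℝ → ℝ := fun x => (Real.log x / 2 + 1) / Real.sqrt x with hdf1_def
  set gf2 : ℝ → ℝ := fun x => Real.sqrt x * (C * Real.sin (μ * Real.log (x / a) + φ))
    with hgf2_def
  set df2 : ℝ → ℝ := fun x =>
    C * (Real.sin (μ * Real.log (x / a) + φ) / 2 + μ * Real.cos (μ * Real.log (x / a) + φ))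
      / Real.sqrt x with hdf2_def
  -- Wronskian constancy on [1, a]
  have hW1 : gf1 a * deriv y a - df1 a * y a = gf1 1 * deriv y 1 - df1 1 * y 1 := by
    apply wronskian_const y gf1 df1 1 1 a ha
    · exact hycont.mono Icc_subset_Ici_self
    · exact hdycont.mono Icc_subset_Ici_self
    · intro x hx
      exact (hg1 (lt_of_lt_of_le one_pos hx.1)).continuousAt.continuousWithinAt
    · intro x hx
      exact (hd1 (lt_of_lt_of_le one_pos hx.1)).continuousAt.continuousWithinAt
    · intro x hx
      exact (hdiffAll x (le_of_lt hx.1)).hasDerivAt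
    · exact hode1
    · intro x hx
      exact hg1 (one_pos.trans hx.1)
    · intro x hx
      exact hd1 (one_pos.trans hx.1)
  have hW1val : gf1 1 * deriv y 1 - df1 1 * y 1 = 0 := by
    simp [hgf1_def, hdf1_def, h0, h0']
  -- matching at a
  have hmatch_g : gf2 a = gf1 a := by
    simp only [hgf2_def, hgf1_def, div_self ha0.ne', Real.log_one, mul_zero, zero_add]
    rw [hsinφ]
  have hmatch_d : df2 a = df1 a := by
    simp only [hdf2_def, hdf1_def, div_self ha0.ne', Real.log_one, mul_zero, zero_add]
    have hnum : C * (Real.sin φ / 2 + μ * Real.cos φ) = la / 2 + 1 := by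
      linear_combination hsinφ / 2 + hcosφ
    rw [hnum]
  -- Wronskian constancy on [a, e] for a ≤ e ≤ b
  have hW2 : ∀ e, a ≤ e → e ≤ b →
      gf2 e * deriv y e - df2 e * y e = gf2 a * deriv y a - df2 a * y a := by
    intro e hea heb
    apply wronskian_const y gf2 df2 (1 + 4 * μ ^ 2) a e hea
    · exact hycont.mono (fun x hx => le_trans ha hx.1)
    · exact hdycont.mono (fun x hx => le_trans ha hx.1)
    · intro x hx
      exact (hg2 C μ φ (lt_of_lt_of_le ha0 hx.1) ha0).continuousAt.continuousWithinAt
    · intro x hx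
      exact (hd2 C μ φ (lt_of_lt_of_le ha0 hx.1) ha0).continuousAt.continuousWithinAt
    · intro x hx
      exact (hdiffAll x (le_trans ha hx.1.le)).hasDerivAt
    · intro x hx
      exact hode2 x ⟨hx.1, lt_of_lt_of_le hx.2 heb⟩
    · intro x hx
      exact hg2 C μ φ (ha0.trans hx.1) ha0
    · intro x hx
      exact hd2 C μ φ (ha0.trans hx.1) ha0
  have hWa0 : gf2 a * deriv y a - df2 a * y a = 0 := by
    rw [hmatch_g, hmatch_d, hW1]; exact hW1val
  have hexp1 : ∀ t : ℝ, 0 < t → 1 < Real.exp t := by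
    intro t ht; rw [← Real.exp_zero]; exact Real.exp_lt_exp.2 ht
  by_cases hcase : θb < π
  · -- kick ends before phase π : solution vanishes beyond b
    set α := C * Real.sin θb with hα_def
    set β := C * (μ * Real.cos θb) with hβ_def
    have hsinθ : 0 < Real.sin θb :=
      Real.sin_pos_of_pos_of_lt_pi (lt_trans (by positivity) hθbgt) hcase
    have hcosθ : Real.cos θb < 0 :=
      Real.cos_neg_of_pi_div_two_lt_of_lt hθbgt (by linarith [Real.pi_pos])
    have hα : 0 < α := by positivity
    have hβ : β < 0 := mul_neg_of_pos_of_neg hC (mul_neg_of_pos_of_neg hμ0 hcosθ)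
    set rs := b * Real.exp (-α / β) with hrs_def
    have ht : 0 < -α / β := div_pos_of_neg_of_neg (by linarith) hβ
    have hrs : b < rs := lt_mul_of_one_lt_right hb0 (hexp1 _ ht)
    set gf3 : ℝ → ℝ := fun x => Real.sqrt x * (α + β * Real.log (x / b)) with hgf3_def
    set df3 : ℝ → ℝ := fun x => ((α + β * Real.log (x / b)) / 2 + β) / Real.sqrt x
      with hdf3_def
    have hlogrs : Real.log (rs / b) = -α / β := by
      rw [hrs_def, mul_div_cancel_left₀ _ hb0.ne', Real.log_exp]
    have hmatch_g3 : gf3 b = gf2 b := by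
      simp only [hgf3_def, hgf2_def, div_self hb0.ne', Real.log_one, mul_zero, add_zero]
      rfl
    have hmatch_d3 : df3 b = df2 b := by
      simp only [hdf3_def, hdf2_def, div_self hb0.ne', Real.log_one, mul_zero, add_zero]
      congr 1
      rw [hα_def, hβ_def]
      ring
    have hW3 : gf3 rs * deriv y rs - df3 rs * y rs = gf3 b * deriv y b - df3 b * y b := by
      apply wronskian_const y gf3 df3 1 b rs hrs.le
      · exact hycont.mono (fun x hx => le_trans hb1.le hx.1)
      · exact hdycont.mono (fun x hx => le_trans hb1.le hx.1)
      · intro x hx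
        exact (hg3 α β (lt_of_lt_of_le hb0 hx.1) hb0).continuousAt.continuousWithinAt
      · intro x hx
        exact (hd3 α β (lt_of_lt_of_le hb0 hx.1) hb0).continuousAt.continuousWithinAt
      · intro x hx
        exact (hdiffAll x (le_trans hb1.le hx.1.le)).hasDerivAt
      · intro x hx
        exact hode3 x hx.1
      · intro x hx
        exact hg3 α β (hb0.trans hx.1) hb0
      · intro x hx
        exact hd3 α β (hb0.trans hx.1) hb0
    have hcancel : α + β * (-α / β) = 0 := by
      rw [mul_comm, div_mul_cancel₀ _ hβ.ne]; ring
    have hgf3rs : gf3 rs = 0 := by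
      simp only [hgf3_def, hlogrs, hcancel, mul_zero]
    have hdf3rs : df3 rs = β / Real.sqrt rs := by
      simp only [hdf3_def, hlogrs, hcancel, zero_div, zero_add]
    have hzero : gf3 rs * deriv y rs - df3 rs * y rs = 0 := by
      rw [hW3, hmatch_g3, hmatch_d3, hW2 b hab.le le_rfl]
      exact hWa0
    rw [hgf3rs, zero_mul, zero_sub, hdf3rs, neg_eq_zero, mul_eq_zero] at hzero
    have hne : β / Real.sqrt rs ≠ 0 :=
      div_ne_zero hβ.ne (Real.sqrt_pos.2 (hb0.trans hrs)).ne'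
    exact hcon rs (hb1.trans hrs) (hzero.resolve_left hne)
  · -- phase reaches π inside the kick
    push_neg at hcase
    set ts := (π - φ) / μ with hts_def
    have hπ := Real.pi_pos
    have hts : 0 < ts := div_pos (by linarith) hμ0
    set rs := a * Real.exp ts with hrs_def
    have hrsa : a < rs := lt_mul_of_one_lt_right ha0 (hexp1 _ hts)
    have hlogrs : Real.log (rs / a) = ts := by
      rw [hrs_def, mul_div_cancel_left₀ _ ha0.ne', Real.log_exp]
    have htsL : ts ≤ L := by
      rw [hts_def, div_le_iff₀ hμ0]
      have : π ≤ μ * L + φ := hcase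
      linarith
    have hrsb : rs ≤ b := by
      have h1 : Real.exp ts ≤ Real.exp L := Real.exp_le_exp.2 htsL
      have h2 : Real.exp L = b / a := by rw [hL_def, Real.exp_log (by positivity)]
      calc rs = a * Real.exp ts := hrs_def
        _ ≤ a * (b / a) := mul_le_mul_of_nonneg_left (h1.trans h2.le) ha0.le
        _ = b := by field_simp
    have hphase : μ * Real.log (rs / a) + φ = π := by
      rw [hlogrs, hts_def]
      field_simp
      ring
    have hg2rs : gf2 rs = 0 := by
      simp only [hgf2_def, hphase, Real.sin_pi, mul_zero]
    have hd2rs : df2 rs = -(C * μ) / Real.sqrt rs := by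
      simp only [hdf2_def, hphase, Real.sin_pi, Real.cos_pi]
      congr 1
      ring
    have hzero : gf2 rs * deriv y rs - df2 rs * y rs = 0 := by
      rw [hW2 rs hrsa.le hrsb]
      exact hWa0
    rw [hg2rs, zero_mul, zero_sub, hd2rs, neg_eq_zero, mul_eq_zero] at hzero
    have hne : -(C * μ) / Real.sqrt rs ≠ 0 :=
      div_ne_zero (neg_ne_zero.2 (mul_pos hC hμ0).ne') (Real.sqrt_pos.2 (ha0.trans hrsa)).ne'
    exact hcon rs (lt_of_le_of_lt ha hrsa) (hzero.resolve_left hne)
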